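/- Farkas–Minkowski alternative theorem (second direction): if there exist ξ ∈ Y₊* with ξ ≠ 0, η ∈ Z₊*, ζ ∈ W* such that ξ(y) + η(z) + ζ(w) ≥ 0 for all x ∈ D, y ∈ f(x), z ∈ g(x), w ∈ h(x), then there is no x⁰ ∈ D satisfying f(x⁰) ∩ (−int Y₊) ≠ ∅, g(x⁰) ∩ (−Z₊) ≠ ∅, and 0 ∈ h(x⁰). -/

import Mathlib

open Pointwise

/-- Farkas–Minkowski alternative theorem, second direction (Theorem 1.2):
if system (ii) has a solution with `ξ ≠ 0`, then system (i) has no solution. -/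
theorem stmt_5 {X Y Z W : Type*}
    [AddCommGroup Y] [Module ℝ Y] [TopologicalSpace Y] [IsTopologicalAddGroup Y]
    [ContinuousSMul ℝ Y]
    [AddCommGroup Z] [Module ℝ Z] [TopologicalSpace Z] [IsTopologicalAddGroup Z]
    [ContinuousSMul ℝ Z]
    [AddCommGroup W] [Module ℝ W] [TopologicalSpace W] [IsTopologicalAddGroup W]
    [ContinuousSMul ℝ W]
    (D : Set X)
    (Yp : Set Y) (Zp : Set Z)
    (hYcone : ∀ y1 ∈ Yp, ∀ y2 ∈ Yp, ∀ a b : ℝ, 0 ≤ a → 0 ≤ b → a • y1 + b • y2 ∈ Yp)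
    (hZcone : ∀ z1 ∈ Zp, ∀ z2 ∈ Zp, ∀ a b : ℝ, 0 ≤ a → 0 ≤ b → a • z1 + b • z2 ∈ Zp)
    (hYint : (interior Yp).Nonempty)
    (f : X → Set Y) (g : X → Set Z) (h : X → Set W)
    (ξ : Y →L[ℝ] ℝ) (η : Z →L[ℝ] ℝ) (ζ : W →L[ℝ] ℝ)
    (hξ : ∀ y ∈ Yp, 0 ≤ ξ y) (hξ0 : ξ ≠ 0) (hη : ∀ z ∈ Zp, 0 ≤ η z)
    (hsol : ∀ x ∈ D, ∀ y ∈ f x, ∀ z ∈ g x, ∀ w ∈ h x, 0 ≤ ξ y + η z + ζ w) :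
    ¬ ∃ x0 ∈ D, (f x0 ∩ (-(interior Yp))).Nonempty ∧
      (g x0 ∩ (-Zp)).Nonempty ∧ (0 : W) ∈ h x0 := by
  rintro ⟨x0, hx0, ⟨y, hyf, hy⟩, ⟨z, hzg, hz⟩, hw⟩
  -- ξ is strictly positive on interior Yp
  have hstrict : ∀ u ∈ interior Yp, 0 < ξ u := by
    intro u hu
    obtain ⟨v, hv⟩ : ∃ v, ξ v ≠ 0 := by
      by_contra hc
      push_neg at hc
      exact hξ0 (ContinuousLinearMap.ext fun v => by simp [hc v])
    set v' : Y := -(ξ v)⁻¹ • v with hv'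
    have hξv' : ξ v' = -1 := by
      simp [hv', map_smul, hv]
    have hcont : Continuous fun t : ℝ => u + t • v' := by continuity
    have h0 : (fun t : ℝ => u + t • v') 0 ∈ interior Yp := by simpa using hu
    have := (hcont.continuousAt (x := (0:ℝ))).preimage_mem_nhds
      (isOpen_interior.mem_nhds h0)
    obtain ⟨ε, hε, hball⟩ := Metric.mem_nhds_iff.mp this
    have hmem : u + (ε/2) • v' ∈ Yp := by
      have : (ε/2 : ℝ) ∈ Metric.ball (0:ℝ) ε := by
        rw [Metric.mem_ball, Real.dist_eq, sub_zero, abs_of_pos (half_pos hε)]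
        linarith
      exact interior_subset (hball this)
    have := hξ _ hmem
    rw [map_add, map_smul, hξv'] at this
    simp only [smul_eq_mul, mul_neg_one] at this
    linarith [half_pos hε]
  have hym : -y ∈ interior Yp := by
    rw [Set.mem_neg] at hy; exact hy
  have h1 : ξ y < 0 := by
    have := hstrict _ hym
    simpa using this
  have h2 : η z ≤ 0 := by
    rw [Set.mem_neg] at hz
    have := hη _ hz
    simpa using this
  have := hsol x0 hx0 y hyf z hzg 0 hw
  simp only [map_zero] at this
  linarith
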